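/- Let A be a Frobenius algebra over k. Then the dual space A* is a Frobenius algebra with multiplication (f·g)(a) := f(a^{(2)})g(a^{(1)}), unit ν_A, comultiplication determined by Δ(f)(a ⊗ b) := f(ba), and counit ν_{A*}(f) := f(1_A). -/

import Mathlib

open TensorProduct

/-- A Frobenius algebra over `k`: a unital associative `k`-algebra `A` together with a
counital coassociative comultiplication satisfying the Frobenius conditions
`Δ(ab) = a^{(1)} ⊗ a^{(2)}b = ab^{(1)} ⊗ b^{(2)}`. -/
structure FrobeniusAlgebra (k A : Type*) [CommRing k] [Ring A] [Algebra k A] where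
  comul : A →ₗ[k] A ⊗[k] A
  counit : A →ₗ[k] k
  coassoc : ∀ a : A,
    TensorProduct.assoc k A A A
        (TensorProduct.map comul (LinearMap.id : A →ₗ[k] A) (comul a))
      = TensorProduct.map (LinearMap.id : A →ₗ[k] A) comul (comul a)
  counit_left : ∀ a : A,
    TensorProduct.lid k A
        (TensorProduct.map counit (LinearMap.id : A →ₗ[k] A) (comul a)) = a
  counit_right : ∀ a : A,
    TensorProduct.rid k A
        (TensorProduct.map (LinearMap.id : A →ₗ[k] A) counit (comul a)) = a
  frob_left : ∀ a b : A,
    comul (a * b)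
      = TensorProduct.map (LinearMap.mulLeft k a) (LinearMap.id : A →ₗ[k] A) (comul b)
  frob_right : ∀ a b : A,
    comul (a * b)
      = TensorProduct.map (LinearMap.id : A →ₗ[k] A) (LinearMap.mulRight k b) (comul a)

/-- A morphism of Frobenius algebras: a linear map which is simultaneously a morphism of
unital algebras and of counital coalgebras. -/
def IsFrobHom {k A B : Type*} [CommRing k] [Ring A] [Algebra k A] [Ring B] [Algebra k B]
    (FA : FrobeniusAlgebra k A) (FB : FrobeniusAlgebra k B) (h : A →ₗ[k] B) : Prop :=
  (∀ a a' : A, h (a * a') = h a * h a') ∧ h 1 = 1 ∧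
  (∀ a : A, FB.comul (h a) = TensorProduct.map h h (FA.comul a)) ∧
  (∀ a : A, FB.counit (h a) = FA.counit a)


section DualFrobenius

variable {k A : Type*} [Field k] [Ring A] [Algebra k A]

/-- The multiplication on the dual space `A*`: `(f · g)(a) = f(a^{(2)}) g(a^{(1)})`. -/
noncomputable def dualMul (FA : FrobeniusAlgebra k A) :
    Module.Dual k A →ₗ[k] Module.Dual k A →ₗ[k] Module.Dual k A :=
  ((TensorProduct.mapBilinear (RingHom.id k) A A k k).compr₂
    ((LinearMap.lcomp k k FA.comul).comp
      (LinearMap.llcomp k (A ⊗[k] A) (k ⊗[k] k) k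
        (TensorProduct.lid k k).toLinearMap))).flip

/-- Evaluation of an element of `A* ⊗ A*` at a pair `(a, b)`. -/
noncomputable def dualPair (t : Module.Dual k A ⊗[k] Module.Dual k A) (a b : A) : k :=
  TensorProduct.lid k k
    (TensorProduct.map (Module.Dual.eval k A a) (Module.Dual.eval k A b) t)

/-- The counit of the dual Frobenius algebra: evaluation at `1`. -/
noncomputable def dualCounit : Module.Dual k A →ₗ[k] k := Module.Dual.eval k A 1


-- ============ Auxiliary development ============

@[simp] lemma dualPair_tmul (f g : Module.Dual k A) (a b : A) :
    dualPair (f ⊗ₜ g) a b = f a * g b := by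
  simp [dualPair, smul_eq_mul]

@[simp] lemma dualPair_zero (a b : A) :
    dualPair (0 : Module.Dual k A ⊗[k] Module.Dual k A) a b = 0 := by
  simp [dualPair]

@[simp] lemma dualPair_add (t s : Module.Dual k A ⊗[k] Module.Dual k A) (a b : A) :
    dualPair (t + s) a b = dualPair t a b + dualPair s a b := by
  simp [dualPair]

@[simp] lemma dualPair_smul (r : k) (t : Module.Dual k A ⊗[k] Module.Dual k A) (a b : A) :
    dualPair (r • t) a b = r * dualPair t a b := by
  simp [dualPair, smul_eq_mul]

lemma dualMul_apply (FA : FrobeniusAlgebra k A) (f g : Module.Dual k A) (a : A) :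
    dualMul FA f g a = TensorProduct.lid k k (TensorProduct.map g f (FA.comul a)) := rfl

/-- left-multiplication dualizer: `DFL f x = (a ↦ f (x * a))`. -/
noncomputable def DFL (f : Module.Dual k A) : A →ₗ[k] Module.Dual k A :=
  (LinearMap.llcomp k A A k f).comp (LinearMap.mul k A)

@[simp] lemma DFL_apply (f : Module.Dual k A) (x a : A) : DFL f x a = f (x * a) := rfl

/-- `DFR FA x = (b ↦ ε (b * x))`. -/
noncomputable def DFR (FA : FrobeniusAlgebra k A) : A →ₗ[k] Module.Dual k A :=
  (LinearMap.llcomp k A A k FA.counit).comp (LinearMap.mul k A).flip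

@[simp] lemma DFR_apply (FA : FrobeniusAlgebra k A) (x b : A) :
    DFR FA x b = FA.counit (b * x) := rfl

lemma DFL_add (f g : Module.Dual k A) : DFL (f + g) = DFL f + DFL g := by
  ext x a; simp

lemma DFL_smul (r : k) (f : Module.Dual k A) : DFL (r • f) = r • DFL f := by
  ext x a; simp

/-- The comultiplication on the dual space. -/
noncomputable def DFDelta (FA : FrobeniusAlgebra k A) :
    Module.Dual k A →ₗ[k] Module.Dual k A ⊗[k] Module.Dual k A where
  toFun f := TensorProduct.map (DFL f) (DFR FA)
    (TensorProduct.comm k A A (FA.comul 1))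
  map_add' f g := by
    simp only [DFL_add, TensorProduct.map_add_left, LinearMap.add_apply]
  map_smul' r f := by
    simp only [DFL_smul, TensorProduct.map_smul_left, LinearMap.smul_apply,
      RingHom.id_apply]

/-- Characterization: `Δs f (a ⊗ b) = f (b * a)`. -/
lemma DFchar (FA : FrobeniusAlgebra k A) (f : Module.Dual k A) (a b : A) :
    dualPair (DFDelta FA f) a b = f (b * a) := by
  have key : ∀ t : A ⊗[k] A,
      dualPair (TensorProduct.map (DFL f) (DFR FA) (TensorProduct.comm k A A t)) a b
        = f ((TensorProduct.lid k A (TensorProduct.map FA.counit LinearMap.id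
            (TensorProduct.map (LinearMap.mulLeft k b) LinearMap.id t))) * a) := by
    intro t
    induction t using TensorProduct.induction_on with
    | zero => simp
    | tmul u v =>
        simp [smul_mul_assoc, smul_eq_mul, mul_comm]
    | add x y hx hy =>
        simp only [map_add, dualPair_add, hx, hy, add_mul, map_add]
  have h2 : TensorProduct.map (LinearMap.mulLeft k b) LinearMap.id (FA.comul 1)
      = FA.comul b := by simpa using (FA.frob_left b 1).symm
  show dualPair (TensorProduct.map (DFL f) (DFR FA)
      (TensorProduct.comm k A A (FA.comul 1))) a b = f (b * a)
  rw [key, h2, FA.counit_left b]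

/-- A Frobenius algebra is finite dimensional. -/
lemma DFfinite (FA : FrobeniusAlgebra k A) : Module.Finite k A := by
  classical
  obtain ⟨s, hs⟩ := TensorProduct.exists_finset (FA.comul 1)
  refine ⟨⟨Finset.image Prod.snd s, eq_top_iff.2 fun a _ => ?_⟩⟩
  have h2 : FA.comul a
      = TensorProduct.map (LinearMap.mulLeft k a) LinearMap.id (FA.comul 1) := by
    simpa using FA.frob_left a 1
  have h1 := FA.counit_left a
  rw [h2, hs] at h1
  simp only [map_sum, TensorProduct.map_tmul, LinearMap.mulLeft_apply, LinearMap.id_coe,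
    id_eq, TensorProduct.lid_tmul] at h1
  rw [← h1]
  exact Submodule.sum_mem _ fun p hp => Submodule.smul_mem _ _
    (Submodule.subset_span (Finset.mem_coe.2 (Finset.mem_image_of_mem _ hp)))

lemma DFdth_eval (t : Module.Dual k A ⊗[k] Module.Dual k A) (a b : A) :
    dualTensorHom k A (Module.Dual k A) t a b = dualPair t a b := by
  induction t using TensorProduct.induction_on with
  | zero => simp
  | tmul f g => simp [smul_eq_mul]
  | add x y hx hy => simp [hx, hy]

lemma DFdth_injective (M : Type*) [AddCommGroup M] [Module k M] [Module.Finite k A] :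
    Function.Injective (dualTensorHom k A M) := by
  have h := dualTensorHomEquivOfBasis_toLinearMap (b := Module.Free.chooseBasis k A) (N := M)
  have : ⇑(dualTensorHom k A M)
      = ⇑(dualTensorHomEquivOfBasis (N := M) (Module.Free.chooseBasis k A)) := by
    rw [← h]; rfl
  rw [this]
  exact (dualTensorHomEquivOfBasis _).injective

lemma DFpair_ext [Module.Finite k A]
    {t t' : Module.Dual k A ⊗[k] Module.Dual k A}
    (h : ∀ a b, dualPair t a b = dualPair t' a b) : t = t' := by
  apply DFdth_injective (Module.Dual k A)
  ext a b
  rw [DFdth_eval, DFdth_eval]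
  exact h a b

lemma DFtriple_ext [Module.Finite k A]
    {t t' : Module.Dual k A ⊗[k] (Module.Dual k A ⊗[k] Module.Dual k A)}
    (h : ∀ a b c, dualPair (dualTensorHom k A _ t a) b c
        = dualPair (dualTensorHom k A _ t' a) b c) : t = t' := by
  apply DFdth_injective (Module.Dual k A ⊗[k] Module.Dual k A)
  ext a
  exact DFpair_ext (fun b c => h a b c)

-- ============ end auxiliary ============

/-- Left contraction of `t : A* ⊗ A*` at `a`. -/
noncomputable def DFcontractL (t : Module.Dual k A ⊗[k] Module.Dual k A) (a : A) :
    Module.Dual k A :=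
  TensorProduct.lid k (Module.Dual k A)
    (TensorProduct.map (Module.Dual.eval k A a) LinearMap.id t)

@[simp] lemma DFcontractL_apply (t : Module.Dual k A ⊗[k] Module.Dual k A) (a v : A) :
    DFcontractL t a v = dualPair t a v := by
  induction t using TensorProduct.induction_on with
  | zero => simp [DFcontractL]
  | tmul f g => simp [DFcontractL, smul_eq_mul]
  | add x y hx hy =>
      have h : DFcontractL (x + y) a = DFcontractL x a + DFcontractL y a := by
        simp [DFcontractL]
      rw [h]; simp [hx, hy]

/-- Right contraction of `t : A* ⊗ A*` at `b`. -/
noncomputable def DFcontractR (t : Module.Dual k A ⊗[k] Module.Dual k A) (b : A) :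
    Module.Dual k A :=
  TensorProduct.rid k (Module.Dual k A)
    (TensorProduct.map LinearMap.id (Module.Dual.eval k A b) t)

@[simp] lemma DFcontractR_apply (t : Module.Dual k A ⊗[k] Module.Dual k A) (b u : A) :
    DFcontractR t b u = dualPair t u b := by
  induction t using TensorProduct.induction_on with
  | zero => simp [DFcontractR]
  | tmul f g => simp [DFcontractR, smul_eq_mul, mul_comm]
  | add x y hx hy =>
      have h : DFcontractR (x + y) b = DFcontractR x b + DFcontractR y b := by
        simp [DFcontractR]
      rw [h]; simp [hx, hy]

lemma DF8aux (FA : FrobeniusAlgebra k A) (f : Module.Dual k A) (b : A)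
    (T : Module.Dual k A ⊗[k] Module.Dual k A) (a : A) :
    dualPair (TensorProduct.map (dualMul FA f) LinearMap.id T) a b
      = TensorProduct.lid k k
          (TensorProduct.map (DFcontractR T b) f (FA.comul a)) := by
  induction T using TensorProduct.induction_on with
  | zero =>
      simp only [map_zero, dualPair_zero, DFcontractR, TensorProduct.map_zero_left,
        LinearMap.zero_apply]
      try simp [TensorProduct.map_zero_left]
  | tmul p q =>
      have hc : DFcontractR (p ⊗ₜ q) b = q b • p := by
        ext u; simp [smul_eq_mul, mul_comm]
      rw [hc]
      simp only [TensorProduct.map_tmul, LinearMap.id_coe, id_eq, dualPair_tmul,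
        dualMul_apply, TensorProduct.map_smul_left, LinearMap.smul_apply, map_smul,
        smul_eq_mul]
      try ring
  | add x y hx hy =>
      simp only [map_add, dualPair_add, hx, hy, DFcontractR, TensorProduct.map_add_left,
        LinearMap.add_apply]

lemma DF9aux (FA : FrobeniusAlgebra k A) (g : Module.Dual k A) (a : A)
    (T : Module.Dual k A ⊗[k] Module.Dual k A) (b : A) :
    dualPair (TensorProduct.map LinearMap.id ((dualMul FA).flip g) T) a b
      = TensorProduct.lid k k
          (TensorProduct.map g (DFcontractL T a) (FA.comul b)) := by
  induction T using TensorProduct.induction_on with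
  | zero =>
      simp only [map_zero, dualPair_zero, DFcontractL, TensorProduct.map_zero_right,
        LinearMap.zero_apply]
      try simp [TensorProduct.map_zero_right]
  | tmul p q =>
      have hc : DFcontractL (p ⊗ₜ q) a = p a • q := by
        ext u; simp [smul_eq_mul]
      rw [hc]
      simp only [TensorProduct.map_tmul, LinearMap.id_coe, id_eq, dualPair_tmul,
        LinearMap.flip_apply, dualMul_apply, TensorProduct.map_smul_right,
        LinearMap.smul_apply, map_smul, smul_eq_mul]
      try ring
  | add x y hx hy =>
      simp only [map_add, dualPair_add, hx, hy, DFcontractL, TensorProduct.map_add_right,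
        LinearMap.add_apply]

set_option maxHeartbeats 1000000 in
set_option synthInstance.maxHeartbeats 200000 in
lemma DF5a (FA : FrobeniusAlgebra k A)
    (T : Module.Dual k A ⊗[k] Module.Dual k A) (a b c : A) :
    dualPair
      (dualTensorHom k A (Module.Dual k A ⊗[k] Module.Dual k A)
        (TensorProduct.map LinearMap.id (DFDelta FA) T) a) b c
      = dualPair T a (c * b) := by
  induction T using TensorProduct.induction_on with
  | zero => simp
  | tmul g h =>
      simp [DFchar, smul_eq_mul]
  | add x y hx hy => simp [map_add, hx, hy]

set_option maxHeartbeats 1000000 in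
set_option synthInstance.maxHeartbeats 200000 in
lemma DF5b (FA : FrobeniusAlgebra k A)
    (T : Module.Dual k A ⊗[k] Module.Dual k A) (a b c : A) :
    dualPair
      (dualTensorHom k A (Module.Dual k A ⊗[k] Module.Dual k A)
        (TensorProduct.assoc k (Module.Dual k A) (Module.Dual k A) (Module.Dual k A)
          (TensorProduct.map (DFDelta FA) LinearMap.id T)) a) b c
      = dualPair T (b * a) c := by
  induction T using TensorProduct.induction_on with
  | zero => simp
  | tmul g h =>
      have inner : ∀ S : Module.Dual k A ⊗[k] Module.Dual k A,
          dualPair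
            (dualTensorHom k A (Module.Dual k A ⊗[k] Module.Dual k A)
              (TensorProduct.assoc k (Module.Dual k A) (Module.Dual k A)
                (Module.Dual k A) (S ⊗ₜ h)) a) b c
            = dualPair S a b * h c := by
        intro S
        induction S using TensorProduct.induction_on with
        | zero => simp
        | tmul p q => simp [smul_eq_mul]; try ring
        | add x y hx hy =>
            simp only [TensorProduct.add_tmul, map_add, LinearMap.add_apply,
              dualPair_add, hx, hy, add_mul]
      simp only [TensorProduct.map_tmul, LinearMap.id_coe, id_eq, inner, DFchar,
        dualPair_tmul]
  | add x y hx hy => simp [map_add, LinearMap.add_apply, hx, hy]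

-- ============ end auxiliary 2 ============


set_option maxHeartbeats 4000000
set_option synthInstance.maxHeartbeats 1000000

/-- The dual space `A*` of a Frobenius algebra `A` is again a Frobenius algebra, with
multiplication `(f·g)(a) = f(a^{(2)})g(a^{(1)})`, unit `ν_A`, comultiplication determined
by `Δ(f)(a ⊗ b) = f(ba)`, and counit `f ↦ f(1)`: these data satisfy associativity,
unitality, coassociativity, counitality, and the Frobenius conditions. -/
theorem dual_frobenius (FA : FrobeniusAlgebra k A) :
    ∃ Δs : Module.Dual k A →ₗ[k] Module.Dual k A ⊗[k] Module.Dual k A,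
      (∀ (f : Module.Dual k A) (a b : A), dualPair (Δs f) a b = f (b * a)) ∧
      (∀ f g h : Module.Dual k A,
          dualMul FA (dualMul FA f g) h = dualMul FA f (dualMul FA g h)) ∧
      (∀ f : Module.Dual k A, dualMul FA FA.counit f = f) ∧
      (∀ f : Module.Dual k A, dualMul FA f FA.counit = f) ∧
      (∀ f : Module.Dual k A,
        TensorProduct.assoc k (Module.Dual k A) (Module.Dual k A) (Module.Dual k A)
            (TensorProduct.map Δs (LinearMap.id : Module.Dual k A →ₗ[k] Module.Dual k A)
              (Δs f))
          = TensorProduct.map (LinearMap.id : Module.Dual k A →ₗ[k] Module.Dual k A) Δs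
              (Δs f)) ∧
      (∀ f : Module.Dual k A,
        TensorProduct.lid k (Module.Dual k A)
          (TensorProduct.map dualCounit
            (LinearMap.id : Module.Dual k A →ₗ[k] Module.Dual k A) (Δs f)) = f) ∧
      (∀ f : Module.Dual k A,
        TensorProduct.rid k (Module.Dual k A)
          (TensorProduct.map (LinearMap.id : Module.Dual k A →ₗ[k] Module.Dual k A)
            dualCounit (Δs f)) = f) ∧
      (∀ f g : Module.Dual k A,
        Δs (dualMul FA f g)
          = TensorProduct.map (dualMul FA f)
              (LinearMap.id : Module.Dual k A →ₗ[k] Module.Dual k A) (Δs g)) ∧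
      (∀ f g : Module.Dual k A,
        Δs (dualMul FA f g)
          = TensorProduct.map (LinearMap.id : Module.Dual k A →ₗ[k] Module.Dual k A)
              ((dualMul FA).flip g) (Δs f)) := by
  classical
  haveI : Module.Finite k A := DFfinite FA
  refine ⟨DFDelta FA, DFchar FA, ?_, ?_, ?_, ?_, ?_, ?_, ?_, ?_⟩
  · -- associativity
    intro f g h
    apply LinearMap.ext; intro a
    have step1 : ∀ t : A ⊗[k] A,
        TensorProduct.lid k k (TensorProduct.map h (dualMul FA f g) t)
          = TensorProduct.lid k k (TensorProduct.map h
              ((TensorProduct.lid k k).toLinearMap ∘ₗ TensorProduct.map g f)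
              (TensorProduct.map LinearMap.id FA.comul t)) := by
      intro t
      induction t using TensorProduct.induction_on with
      | zero => simp
      | tmul u v => simp [dualMul_apply, smul_eq_mul]
      | add x y hx hy => simp [map_add, hx, hy]
    have step3 : ∀ t : A ⊗[k] A,
        TensorProduct.lid k k (TensorProduct.map
            ((TensorProduct.lid k k).toLinearMap ∘ₗ TensorProduct.map h g) f
            (TensorProduct.map FA.comul LinearMap.id t))
          = TensorProduct.lid k k (TensorProduct.map (dualMul FA g h) f t) := by
      intro t
      induction t using TensorProduct.induction_on with
      | zero => simp
      | tmul u v => simp [dualMul_apply, smul_eq_mul]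
      | add x y hx hy => simp [map_add, hx, hy]
    have step2 : ∀ s : (A ⊗[k] A) ⊗[k] A,
        TensorProduct.lid k k (TensorProduct.map h
            ((TensorProduct.lid k k).toLinearMap ∘ₗ TensorProduct.map g f)
            (TensorProduct.assoc k A A A s))
          = TensorProduct.lid k k (TensorProduct.map
              ((TensorProduct.lid k k).toLinearMap ∘ₗ TensorProduct.map h g) f s) := by
      intro s
      induction s using TensorProduct.induction_on with
      | zero => simp
      | tmul x w =>
          induction x using TensorProduct.induction_on with
          | zero => simp
          | tmul u v => simp [smul_eq_mul, mul_assoc]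
          | add x1 x2 h1 h2 =>
              simp only [TensorProduct.add_tmul, map_add, h1, h2]
      | add x y hx hy => simp [map_add, hx, hy]
    show TensorProduct.lid k k (TensorProduct.map h (dualMul FA f g) (FA.comul a))
        = TensorProduct.lid k k (TensorProduct.map (dualMul FA g h) f (FA.comul a))
    rw [step1, ← FA.coassoc a, step2, step3]
  · -- left unit
    intro f
    apply LinearMap.ext; intro a
    have key : ∀ t : A ⊗[k] A,
        TensorProduct.lid k k (TensorProduct.map f FA.counit t)
          = f (TensorProduct.rid k A
              (TensorProduct.map LinearMap.id FA.counit t)) := by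
      intro t
      induction t using TensorProduct.induction_on with
      | zero => simp
      | tmul u v => simp [smul_eq_mul, mul_comm]
      | add x y hx hy => simp [map_add, hx, hy]
    show TensorProduct.lid k k (TensorProduct.map f FA.counit (FA.comul a)) = f a
    rw [key, FA.counit_right a]
  · -- right unit
    intro f
    apply LinearMap.ext; intro a
    have key : ∀ t : A ⊗[k] A,
        TensorProduct.lid k k (TensorProduct.map FA.counit f t)
          = f (TensorProduct.lid k A
              (TensorProduct.map FA.counit LinearMap.id t)) := by
      intro t
      induction t using TensorProduct.induction_on with
      | zero => simp
      | tmul u v => simp [smul_eq_mul]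
      | add x y hx hy => simp [map_add, hx, hy]
    show TensorProduct.lid k k (TensorProduct.map FA.counit f (FA.comul a)) = f a
    rw [key, FA.counit_left a]
  · -- coassociativity
    intro f
    apply DFtriple_ext
    intro a b c
    rw [DF5b, DF5a, DFchar, DFchar, mul_assoc]
  · -- left counit
    intro f
    apply LinearMap.ext; intro a
    have key : ∀ T : Module.Dual k A ⊗[k] Module.Dual k A,
        (TensorProduct.lid k (Module.Dual k A)
          (TensorProduct.map dualCounit LinearMap.id T)) a = dualPair T 1 a := by
      intro T
      induction T using TensorProduct.induction_on with
      | zero => simp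
      | tmul p q => simp [dualCounit, smul_eq_mul]
      | add x y hx hy => simp [map_add, LinearMap.add_apply, hx, hy]
    rw [key, DFchar, mul_one]
  · -- right counit
    intro f
    apply LinearMap.ext; intro a
    have key : ∀ T : Module.Dual k A ⊗[k] Module.Dual k A,
        (TensorProduct.rid k (Module.Dual k A)
          (TensorProduct.map LinearMap.id dualCounit T)) a = dualPair T a 1 := by
      intro T
      induction T using TensorProduct.induction_on with
      | zero => simp
      | tmul p q => simp [dualCounit, smul_eq_mul, mul_comm]
      | add x y hx hy => simp [map_add, LinearMap.add_apply, hx, hy]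
    rw [key, DFchar, one_mul]
  · -- Frobenius left
    intro f g
    apply DFpair_ext
    intro a b
    have hc : DFcontractR (DFDelta FA g) b = DFL g b := by
      ext u; rw [DFcontractR_apply, DFchar, DFL_apply]
    have hcomp : ∀ t : A ⊗[k] A,
        TensorProduct.map g f
            (TensorProduct.map (LinearMap.mulLeft k b) LinearMap.id t)
          = TensorProduct.map (DFL g b) f t := by
      intro t
      induction t using TensorProduct.induction_on with
      | zero => simp
      | tmul u v => simp
      | add x y hx hy => simp [map_add, hx, hy]
    rw [DFchar, DF8aux, hc, dualMul_apply, FA.frob_left b a, hcomp (FA.comul a)]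
  · -- Frobenius right
    intro f g
    apply DFpair_ext
    intro a b
    have hc : DFcontractL (DFDelta FA f) a = f ∘ₗ LinearMap.mulRight k a := by
      ext u; rw [DFcontractL_apply, DFchar]; simp
    have hcomp : ∀ t : A ⊗[k] A,
        TensorProduct.map g f
            (TensorProduct.map LinearMap.id (LinearMap.mulRight k a) t)
          = TensorProduct.map g (f ∘ₗ LinearMap.mulRight k a) t := by
      intro t
      induction t using TensorProduct.induction_on with
      | zero => simp
      | tmul u v => simp
      | add x y hx hy => simp [map_add, hx, hy]
    rw [DFchar, DF9aux, hc, dualMul_apply, FA.frob_right b a, hcomp (FA.comul b)]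

end DualFrobenius
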